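/- Let ω, λ ∈ ℝ, let μ ∈ ℂ with Re μ = 0, and let (a,b) ∈ ℂ² ∖ {(0,0)} satisfy (ω+λ)a + μb = 0 and μa + (ω−λ)b = 0. Let f : (0,∞) → ℂ² be smooth, vanish for all sufficiently large x, and satisfy f(x) = c · x^μ (a,b) for all 0 < x < x₀, for some c ∈ ℂ and x₀ > 0. Then the function x ↦ f(x)* (D_{ω,λ}f)(x) is integrable on (0,∞) and Im ∫₀^∞ f(x)* (D_{ω,λ}f)(x) dx = −|c|² Im( conj(b) a ). -/

import Mathlib

open MeasureTheory

/-- The formal 1-dimensional Dirac-Coulomb operator `D_{ω,λ}`. -/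
noncomputable def diracCoulomb (ω lam : ℂ) (f : ℝ → ℂ × ℂ) : ℝ → ℂ × ℂ :=
  fun x =>
    (-((lam + ω) / (x : ℂ)) * (f x).1 - deriv (fun y => (f y).2) x,
     deriv (fun y => (f y).1) x - ((lam - ω) / (x : ℂ)) * (f x).2)

/-- For real `ω, λ`, purely imaginary `μ` and a zero-mode boundary datum `(a,b)`, the
imaginary part of the quadratic form of `D_{ω,λ}` on a function behaving like
`c·x^μ(a,b)` near `0` equals `−|c|² Im(conj(b)·a)`. -/
theorem diracCoulomb_im_form_boundary (ω lam : ℝ) (μ : ℂ) (hμ : μ.re = 0)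
    (a b : ℂ) (hab : (a, b) ≠ (0, 0))
    (h1 : ((ω : ℂ) + (lam : ℂ)) * a + μ * b = 0)
    (h2 : μ * a + ((ω : ℂ) - (lam : ℂ)) * b = 0)
    (f : ℝ → ℂ × ℂ) (hsm : ContDiffOn ℝ (⊤ : ℕ∞) f (Set.Ioi 0))
    (hvan : ∃ X : ℝ, ∀ x : ℝ, X ≤ x → f x = 0)
    (c : ℂ) (x₀ : ℝ) (hx₀ : 0 < x₀)
    (hnear : ∀ x ∈ Set.Ioo (0 : ℝ) x₀, f x = (c * (x : ℂ) ^ μ * a, c * (x : ℂ) ^ μ * b)) :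
    IntegrableOn
        (fun x => (starRingEnd ℂ) (f x).1 * (diracCoulomb (ω : ℂ) (lam : ℂ) f x).1 +
          (starRingEnd ℂ) (f x).2 * (diracCoulomb (ω : ℂ) (lam : ℂ) f x).2)
        (Set.Ioi 0) ∧
      (∫ x in Set.Ioi (0 : ℝ),
          ((starRingEnd ℂ) (f x).1 * (diracCoulomb (ω : ℂ) (lam : ℂ) f x).1 +
            (starRingEnd ℂ) (f x).2 * (diracCoulomb (ω : ℂ) (lam : ℂ) f x).2)).im =
        -‖c‖ ^ 2 * ((starRingEnd ℂ) b * a).im := by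
  obtain ⟨X, hX⟩ := hvan
  set g : ℝ → ℂ := fun x => (starRingEnd ℂ) (f x).1 * (diracCoulomb (ω : ℂ) (lam : ℂ) f x).1 +
      (starRingEnd ℂ) (f x).2 * (diracCoulomb (ω : ℂ) (lam : ℂ) f x).2 with hgdef
  set p : ℝ := x₀ / 2 with hpdef
  set X' : ℝ := max X x₀ with hX'def
  have hp0 : 0 < p := by positivity
  have hppx : p < x₀ := by rw [hpdef]; linarith
  have hpX' : p ≤ X' := le_trans (le_of_lt hppx) (le_max_right _ _)
  -- derivatives of the components near 0
  have hderiv_near : ∀ x ∈ Set.Ioo (0:ℝ) x₀,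
      deriv (fun y => (f y).1) x = c * (μ * (x:ℂ) ^ (μ - 1)) * a ∧
      deriv (fun y => (f y).2) x = c * (μ * (x:ℂ) ^ (μ - 1)) * b := by
    intro x hx
    have hx0 : (0:ℝ) < x := hx.1
    have hmem : Set.Ioo (0:ℝ) x₀ ∈ nhds x := isOpen_Ioo.mem_nhds hx
    have hcpow : HasDerivAt (fun y : ℝ => ((y:ℂ)) ^ μ) (μ * (x:ℂ) ^ (μ - 1)) x := by
      have h0 : HasStrictDerivAt (fun z : ℂ => z ^ μ) (μ * (x:ℂ) ^ (μ - 1)) (x:ℂ) :=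
        Complex.hasStrictDerivAt_cpow_const (Complex.ofReal_mem_slitPlane.2 hx0)
      exact h0.hasDerivAt.comp_ofReal
    constructor
    · have hEv : (fun y => (f y).1) =ᶠ[nhds x] fun y : ℝ => c * (y:ℂ) ^ μ * a :=
        Filter.eventuallyEq_of_mem hmem (fun y hy => by rw [hnear y hy])
      rw [hEv.deriv_eq]
      exact ((hcpow.const_mul c).mul_const a).deriv
    · have hEv : (fun y => (f y).2) =ᶠ[nhds x] fun y : ℝ => c * (y:ℂ) ^ μ * b :=
        Filter.eventuallyEq_of_mem hmem (fun y hy => by rw [hnear y hy])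
      rw [hEv.deriv_eq]
      exact ((hcpow.const_mul c).mul_const b).deriv
  -- g vanishes near 0
  have hg_near : ∀ x ∈ Set.Ioo (0:ℝ) x₀, g x = 0 := by
    intro x hx
    obtain ⟨hd1, hd2⟩ := hderiv_near x hx
    have hxne : (x:ℂ) ≠ 0 := Complex.ofReal_ne_zero.2 (ne_of_gt hx.1)
    have hpow : (x:ℂ) ^ (μ - 1) = (x:ℂ) ^ μ / (x:ℂ) := by
      rw [Complex.cpow_sub _ _ hxne, Complex.cpow_one]
    rw [hpow] at hd1 hd2
    simp only [hgdef, diracCoulomb, hd1, hd2, hnear x hx, map_mul]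
    linear_combination ((starRingEnd ℂ) c * c * (starRingEnd ℂ) ((x:ℂ) ^ μ) * (x:ℂ) ^ μ / (x:ℂ)) *
      ((starRingEnd ℂ) b * h2 - (starRingEnd ℂ) a * h1)
  -- g vanishes far away
  have hg_far : ∀ x : ℝ, X ≤ x → g x = 0 := by
    intro x hx
    simp [hgdef, hX x hx]
  -- continuity
  have hf1 : ContDiffOn ℝ (⊤:ℕ∞) (fun y => (f y).1) (Set.Ioi 0) := hsm.fst
  have hf2 : ContDiffOn ℝ (⊤:ℕ∞) (fun y => (f y).2) (Set.Ioi 0) := hsm.snd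
  have hc1 : ContinuousOn (fun y => (f y).1) (Set.Ioi 0) := hf1.continuousOn
  have hc2 : ContinuousOn (fun y => (f y).2) (Set.Ioi 0) := hf2.continuousOn
  have hd1c : ContinuousOn (deriv fun y => (f y).1) (Set.Ioi 0) :=
    hf1.continuousOn_deriv_of_isOpen isOpen_Ioi (by exact_mod_cast le_top)
  have hd2c : ContinuousOn (deriv fun y => (f y).2) (Set.Ioi 0) :=
    hf2.continuousOn_deriv_of_isOpen isOpen_Ioi (by exact_mod_cast le_top)
  have hne : ∀ x ∈ Set.Ioi (0:ℝ), (x:ℂ) ≠ 0 := fun x hx =>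
    Complex.ofReal_ne_zero.2 (ne_of_gt hx)
  have hgc : ContinuousOn g (Set.Ioi 0) := by
    rw [hgdef]
    simp only [diracCoulomb, starRingEnd_apply]
    apply ContinuousOn.add
    · exact hc1.star.mul
        (((continuousOn_const.div Complex.continuous_ofReal.continuousOn hne).neg.mul hc1).sub hd2c)
    · exact hc2.star.mul
        (hd1c.sub ((continuousOn_const.div Complex.continuous_ofReal.continuousOn hne).mul hc2))
  -- integrability
  have heq1 : Set.EqOn g 0 (Set.Ioc 0 p) := fun x hx =>
    hg_near x ⟨hx.1, lt_of_le_of_lt hx.2 hppx⟩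
  have heq3 : Set.EqOn g 0 (Set.Ioi X') := fun x hx =>
    hg_far x (le_trans (le_max_left _ _) (le_of_lt hx))
  have hint1 : IntegrableOn g (Set.Ioc 0 p) := by
    rw [integrableOn_congr_fun heq1 measurableSet_Ioc]; exact integrableOn_zero
  have hint2 : IntegrableOn g (Set.Ioc p X') := by
    have hsub : Set.Icc p X' ⊆ Set.Ioi 0 := fun x hx => lt_of_lt_of_le hp0 hx.1
    exact ((hgc.mono hsub).integrableOn_Icc).mono_set Set.Ioc_subset_Icc_self
  have hint3 : IntegrableOn g (Set.Ioi X') := by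
    rw [integrableOn_congr_fun heq3 measurableSet_Ioi]; exact integrableOn_zero
  have hIoiP : Set.Ioc p X' ∪ Set.Ioi X' = Set.Ioi p := Set.Ioc_union_Ioi_eq_Ioi hpX'
  have hIoi0 : Set.Ioc 0 p ∪ Set.Ioi p = Set.Ioi 0 := Set.Ioc_union_Ioi_eq_Ioi (le_of_lt hp0)
  have hintIoiP : IntegrableOn g (Set.Ioi p) := by rw [← hIoiP]; exact hint2.union hint3
  have hint : IntegrableOn g (Set.Ioi 0) := by rw [← hIoi0]; exact hint1.union hintIoiP
  refine ⟨hint, ?_⟩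
  -- splitting the integral
  have hzero1 : ∫ x in Set.Ioc (0:ℝ) p, g x = 0 := by
    rw [setIntegral_congr_fun measurableSet_Ioc heq1]; simp
  have hzero3 : ∫ x in Set.Ioi X', g x = 0 := by
    rw [setIntegral_congr_fun measurableSet_Ioi heq3]; simp
  have hsplit : ∫ x in Set.Ioi (0:ℝ), g x = ∫ x in Set.Ioc p X', g x := by
    rw [← hIoi0, setIntegral_union (Set.Ioc_disjoint_Ioi le_rfl) measurableSet_Ioi hint1 hintIoiP,
      hzero1, zero_add, ← hIoiP,
      setIntegral_union (Set.Ioc_disjoint_Ioi le_rfl) measurableSet_Ioi hint2 hint3, hzero3,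
      add_zero]
  -- the antiderivative of Im g
  set φ : ℝ → ℝ := fun y => ((f y).1 * (starRingEnd ℂ) ((f y).2)).im with hφdef
  have hφderiv : ∀ x ∈ Set.uIcc p X', HasDerivAt φ ((g x).im) x := by
    intro x hx
    rw [Set.uIcc_of_le hpX'] at hx
    have hx0 : (0:ℝ) < x := lt_of_lt_of_le hp0 hx.1
    have hdiff : DifferentiableAt ℝ f x :=
      (hsm.contDiffAt (isOpen_Ioi.mem_nhds hx0)).differentiableAt (by simp)
    have hd1 : HasDerivAt (fun y => (f y).1) (deriv (fun y => (f y).1) x) x :=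
      hdiff.fst.hasDerivAt
    have hd2 : HasDerivAt (fun y => (f y).2) (deriv (fun y => (f y).2) x) x :=
      hdiff.snd.hasDerivAt
    have hstar : HasDerivAt (fun y => (starRingEnd ℂ) ((f y).2))
        ((starRingEnd ℂ) (deriv (fun y => (f y).2) x)) x := by
      simpa only [starRingEnd_apply] using hd2.star
    have hmul := hd1.mul hstar
    have him := Complex.imCLM.hasFDerivAt.comp_hasDerivAt x hmul
    have him' : HasDerivAt φ
        ((deriv (fun y => (f y).1) x * (starRingEnd ℂ) ((f x).2) +
          (f x).1 * (starRingEnd ℂ) (deriv (fun y => (f y).2) x)).im) x := by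
      simpa [hφdef, Function.comp_def] using him
    have heq : (deriv (fun y => (f y).1) x * (starRingEnd ℂ) ((f x).2) +
          (f x).1 * (starRingEnd ℂ) (deriv (fun y => (f y).2) x)).im = (g x).im := by
      simp only [hgdef, diracCoulomb]
      have hxne : (x:ℝ) ≠ 0 := ne_of_gt hx0
      have hr1 : ((lam:ℂ) + ω) / (x:ℂ) = (((lam + ω)/x : ℝ) : ℂ) := by push_cast; ring
      have hr2 : ((lam:ℂ) - ω) / (x:ℂ) = (((lam - ω)/x : ℝ) : ℂ) := by push_cast; ring
      rw [hr1, hr2]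
      simp only [Complex.add_im, Complex.sub_im, Complex.neg_im, Complex.mul_im,
        Complex.add_re, Complex.sub_re, Complex.mul_re,
        Complex.neg_re, Complex.ofReal_re, Complex.ofReal_im, Complex.conj_re, Complex.conj_im]
      ring
    exact heq ▸ him'
  have hImg_cont : ContinuousOn (fun x => (g x).im) (Set.uIcc p X') := by
    rw [Set.uIcc_of_le hpX']
    exact Complex.continuous_im.comp_continuousOn
      (hgc.mono (fun x hx => lt_of_lt_of_le hp0 hx.1))
  have hftc : ∫ x in p..X', (g x).im = φ X' - φ p :=
    intervalIntegral.integral_eq_sub_of_hasDerivAt hφderiv hImg_cont.intervalIntegrable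
  have hIm : (∫ x in Set.Ioc p X', g x).im = ∫ x in Set.Ioc p X', (g x).im := by
    have := integral_im (μ := volume.restrict (Set.Ioc p X')) (f := g) hint2
    simpa using this.symm
  have hIoc : ∫ x in Set.Ioc p X', (g x).im = ∫ x in p..X', (g x).im :=
    (intervalIntegral.integral_of_le hpX').symm
  -- boundary values
  have hφX' : φ X' = 0 := by simp [hφdef, hX X' (le_max_left _ _)]
  have hφp : φ p = ‖c‖^2 * ((starRingEnd ℂ) b * a).im := by
    have hpmem : p ∈ Set.Ioo (0:ℝ) x₀ := ⟨hp0, hppx⟩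
    have hpne : (p:ℂ) ≠ 0 := Complex.ofReal_ne_zero.2 (ne_of_gt hp0)
    have hconjμ : (starRingEnd ℂ) μ = -μ := Complex.ext (by simp [hμ]) (by simp)
    have harg : Complex.arg (p:ℂ) ≠ Real.pi := by
      rw [Complex.arg_ofReal_of_nonneg (le_of_lt hp0)]
      exact Real.pi_ne_zero.symm
    have hconjpow : (starRingEnd ℂ) ((p:ℂ) ^ μ) = ((p:ℂ) ^ μ)⁻¹ := by
      have h := Complex.conj_cpow (p:ℂ) μ harg
      rw [Complex.conj_ofReal] at h
      calc (starRingEnd ℂ) ((p:ℂ) ^ μ)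
          = (starRingEnd ℂ) ((starRingEnd ℂ) ((p:ℂ) ^ (starRingEnd ℂ) μ)) := by rw [← h]
        _ = (p:ℂ) ^ (starRingEnd ℂ) μ := Complex.conj_conj _
        _ = (p:ℂ) ^ (-μ) := by rw [hconjμ]
        _ = ((p:ℂ) ^ μ)⁻¹ := Complex.cpow_neg _ _
    have hpow_ne : (p:ℂ) ^ μ ≠ 0 := by
      simp [Complex.cpow_eq_zero_iff, hpne]
    have hcc : c * (starRingEnd ℂ) c = ((‖c‖ : ℂ))^2 := by
      rw [Complex.mul_conj, ← Complex.sq_norm]; push_cast; ring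
    have hval : (f p).1 * (starRingEnd ℂ) ((f p).2)
        = ((‖c‖ ^ 2 : ℝ) : ℂ) * ((starRingEnd ℂ) b * a) := by
      rw [hnear p hpmem]
      simp only [map_mul, hconjpow]
      field_simp
      push_cast
      linear_combination (a * (starRingEnd ℂ) b) * hcc
    rw [hφdef]
    show ((f p).1 * (starRingEnd ℂ) ((f p).2)).im = _
    rw [hval]
    simp [Complex.mul_im, ← Complex.ofReal_pow, Complex.ofReal_re, Complex.ofReal_im]
  -- conclusion
  calc (∫ x in Set.Ioi (0:ℝ), g x).im
      = (∫ x in Set.Ioc p X', g x).im := by rw [hsplit]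
    _ = ∫ x in Set.Ioc p X', (g x).im := hIm
    _ = ∫ x in p..X', (g x).im := hIoc
    _ = φ X' - φ p := hftc
    _ = -‖c‖ ^ 2 * ((starRingEnd ℂ) b * a).im := by rw [hφX', hφp]; ring
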